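/- arXiv:2501.17524 — 2 statements merged into one kernel-verified Lean document; each statement's English description precedes it below -/
import Mathlib

section
/- Let $n \geq 5$ be odd and $\delta : A_n \to I_2$ a derivation, where $I_2 = \{x \in \mathbb{F}_2^n : \sum_i x_i = 0\}$ with the natural $A_n$-action. If $x = ((1\,2)(3\,4))^\delta$, then $x_5 = x_6 = \cdots = x_n = 0$ and $x_1 + x_2 = x_3 + x_4 = 0$; in particular there are at most $4$ possible values of $x$. -/
/-- `δ : Aₙ → 𝔽₂ⁿ` is a derivation into the augmentation module `I₂`:
its values have coordinate-sum zero and it satisfies the cocycle identity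
`δ(gh) = δ(g)^h + δ(h)` for the coordinate-permutation action. -/
def IsDer (n : ℕ) (δ : ↥(alternatingGroup (Fin n)) → Fin n → ZMod 2) : Prop :=
  (∀ g, ∑ i, δ g i = 0) ∧
  (∀ g h : ↥(alternatingGroup (Fin n)),
    δ (g * h) = (fun i => δ g ((h : Equiv.Perm (Fin n))⁻¹ i)) + δ h)

-- auxiliary: in ZMod 2, a + b = 0 ↔ a = b
lemma zmod2_add_eq_zero {a b : ZMod 2} (h : a + b = 0) : a = b := by
  have := CharTwo.add_self_eq_zero b
  have : a = -b := eq_neg_of_add_eq_zero_left h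
  simpa [CharTwo.neg_eq] using this

lemma card_ub (n : ℕ) (hn : 4 < n) :
    ({x : Fin n → ZMod 2 | (∀ i : Fin n, 4 ≤ (i : ℕ) → x i = 0) ∧
        x ⟨0, by omega⟩ + x ⟨1, by omega⟩ = 0 ∧
        x ⟨2, by omega⟩ + x ⟨3, by omega⟩ = 0}).ncard ≤ 4 := by
  have h4 : (Set.univ : Set (ZMod 2 × ZMod 2)).ncard = 4 := by
    rw [Set.ncard_univ]
    simp [Nat.card_eq_fintype_card]
  calc _ ≤ (Set.univ : Set (ZMod 2 × ZMod 2)).ncard := by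
        apply Set.ncard_le_ncard_of_injOn
          (fun x => (x ⟨0, by omega⟩, x ⟨2, by omega⟩))
        · intro a _; trivial
        · rintro x ⟨hx4, hx01, hx23⟩ y ⟨hy4, hy01, hy23⟩ hxy
          have h0 : x ⟨0, by omega⟩ = y ⟨0, by omega⟩ := congrArg Prod.fst hxy
          have h2 : x ⟨2, by omega⟩ = y ⟨2, by omega⟩ := congrArg Prod.snd hxy
          have hx1 := (zmod2_add_eq_zero hx01).symm
          have hy1 := (zmod2_add_eq_zero hy01).symm
          have hx3 := (zmod2_add_eq_zero hx23).symm
          have hy3 := (zmod2_add_eq_zero hy23).symm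
          funext i
          rcases Nat.lt_or_ge (i : ℕ) 4 with hi | hi
          · have : (i : ℕ) = 0 ∨ (i : ℕ) = 1 ∨ (i : ℕ) = 2 ∨ (i : ℕ) = 3 := by omega
            rcases this with h | h | h | h
            · have : i = ⟨0, by omega⟩ := Fin.ext h
              rw [this]; exact h0
            · have : i = ⟨1, by omega⟩ := Fin.ext h
              rw [this, hx1, hy1]; exact h0
            · have : i = ⟨2, by omega⟩ := Fin.ext h
              rw [this]; exact h2
            · have : i = ⟨3, by omega⟩ := Fin.ext h
              rw [this, hx3, hy3]; exact h2
          · rw [hx4 i hi, hy4 i hi]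
    _ = 4 := h4

/-- For odd `n ≥ 5` and a derivation `δ : Aₙ → I₂`, the value
`x = δ((1 2)(3 4))` satisfies `x₅ = ⋯ = xₙ = 0` and `x₁ + x₂ = x₃ + x₄ = 0`;
in particular there are at most `4` possible values of `x`. -/
theorem stmt_15 (n : ℕ) (hn : 5 ≤ n) (hodd : Odd n)
    (δ : ↥(alternatingGroup (Fin n)) → Fin n → ZMod 2) (hδ : IsDer n δ)
    (g : ↥(alternatingGroup (Fin n)))
    (hg : (g : Equiv.Perm (Fin n)) =
      Equiv.swap ⟨0, by omega⟩ ⟨1, by omega⟩ * Equiv.swap ⟨2, by omega⟩ ⟨3, by omega⟩) :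
    (∀ i : Fin n, 4 ≤ (i : ℕ) → δ g i = 0) ∧
    δ g ⟨0, by omega⟩ + δ g ⟨1, by omega⟩ = 0 ∧
    δ g ⟨2, by omega⟩ + δ g ⟨3, by omega⟩ = 0 ∧
    ({x : Fin n → ZMod 2 | (∀ i : Fin n, 4 ≤ (i : ℕ) → x i = 0) ∧
        x ⟨0, by omega⟩ + x ⟨1, by omega⟩ = 0 ∧
        x ⟨2, by omega⟩ + x ⟨3, by omega⟩ = 0}).ncard ≤ 4 := by
  obtain ⟨hsum, hder⟩ := hδ
  set e0 : Fin n := ⟨0, by omega⟩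
  set e1 : Fin n := ⟨1, by omega⟩
  set e2 : Fin n := ⟨2, by omega⟩
  set e3 : Fin n := ⟨3, by omega⟩
  set e4 : Fin n := ⟨4, by omega⟩
  -- δ 1 = 0
  have hδ1 : δ 1 = 0 := by
    have := hder 1 1
    simp only [mul_one] at this
    funext i
    have h := congrFun this i
    simp only [OneMemClass.coe_one, inv_one, Equiv.Perm.one_apply, Pi.add_apply] at h
    rw [CharTwo.add_self_eq_zero] at h
    exact h
  -- basic inequalities among the small indices
  have v0 : (e0 : ℕ) = 0 := rfl
  have v1 : (e1 : ℕ) = 1 := rfl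
  have v2 : (e2 : ℕ) = 2 := rfl
  have v3 : (e3 : ℕ) = 3 := rfl
  have v4 : (e4 : ℕ) = 4 := rfl
  have nemk : ∀ (a b : Fin n), (a : ℕ) ≠ (b : ℕ) → a ≠ b := fun a b h => Fin.ne_of_val_ne h
  have ne01 : e0 ≠ e1 := nemk _ _ (by rw [v0, v1]; omega)
  have ne23 : e2 ≠ e3 := nemk _ _ (by rw [v2, v3]; omega)
  have ne02 : e0 ≠ e2 := nemk _ _ (by rw [v0, v2]; omega)
  have ne03 : e0 ≠ e3 := nemk _ _ (by rw [v0, v3]; omega)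
  have ne13 : e1 ≠ e3 := nemk _ _ (by rw [v1, v3]; omega)
  -- g * g = 1
  have hdisj0 : (Equiv.swap e0 e1).Disjoint (Equiv.swap e2 e3) := by
    intro x
    by_cases hx : (x : ℕ) < 2
    · right
      exact Equiv.swap_apply_of_ne_of_ne (nemk _ _ (by rw [v2]; omega))
        (nemk _ _ (by rw [v3]; omega))
    · left
      exact Equiv.swap_apply_of_ne_of_ne (nemk _ _ (by rw [v0]; omega))
        (nemk _ _ (by rw [v1]; omega))
  have hgg : (g : Equiv.Perm (Fin n)) * (g : Equiv.Perm (Fin n)) = 1 := by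
    rw [hg]
    calc (Equiv.swap e0 e1 * Equiv.swap e2 e3) * (Equiv.swap e0 e1 * Equiv.swap e2 e3)
        = (Equiv.swap e0 e1 * Equiv.swap e0 e1) * (Equiv.swap e2 e3 * Equiv.swap e2 e3) := by
          rw [mul_assoc, ← mul_assoc (Equiv.swap e2 e3), ← hdisj0.commute.eq,
            mul_assoc, ← mul_assoc]
      _ = 1 := by rw [Equiv.swap_mul_self, Equiv.swap_mul_self, mul_one]
  have hgg' : g * g = 1 := by
    apply Subtype.ext
    simpa using hgg
  have hginv : (g : Equiv.Perm (Fin n))⁻¹ = (g : Equiv.Perm (Fin n)) :=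
    inv_eq_of_mul_eq_one_right hgg
  -- δ g is g-invariant
  have hfix : ∀ i, δ g ((g : Equiv.Perm (Fin n)) i) = δ g i := by
    intro i
    have h := congrFun (hder g g) i
    rw [hgg', hδ1] at h
    simp only [Pi.zero_apply, Pi.add_apply, hginv] at h
    exact zmod2_add_eq_zero h.symm
  -- values of g
  have hge0 : (g : Equiv.Perm (Fin n)) e0 = e1 := by
    have s1 : (Equiv.swap e2 e3) e0 = e0 := Equiv.swap_apply_of_ne_of_ne ne02 ne03
    rw [hg, Equiv.Perm.mul_apply, s1, Equiv.swap_apply_left]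
  have hge2 : (g : Equiv.Perm (Fin n)) e2 = e3 := by
    have s1 : (Equiv.swap e0 e1) e3 = e3 :=
      Equiv.swap_apply_of_ne_of_ne (Ne.symm ne03) (Ne.symm ne13)
    rw [hg, Equiv.Perm.mul_apply, Equiv.swap_apply_left, s1]
  have hgfix : ∀ m : Fin n, 4 ≤ (m : ℕ) → (g : Equiv.Perm (Fin n)) m = m := by
    intro m hm
    have s1 : (Equiv.swap e2 e3) m = m :=
      Equiv.swap_apply_of_ne_of_ne (nemk _ _ (by rw [v2]; omega)) (nemk _ _ (by rw [v3]; omega))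
    have s2 : (Equiv.swap e0 e1) m = m :=
      Equiv.swap_apply_of_ne_of_ne (nemk _ _ (by rw [v0]; omega)) (nemk _ _ (by rw [v1]; omega))
    rw [hg, Equiv.Perm.mul_apply, s1, s2]
  have h01 : δ g e1 = δ g e0 := by rw [← hge0]; exact hfix e0
  have h23 : δ g e3 = δ g e2 := by rw [← hge2]; exact hfix e2
  -- key: δ g takes equal values on any two of three distinct large indices
  have key : ∀ i j k : Fin n, 4 ≤ (i : ℕ) → 4 ≤ (j : ℕ) → 4 ≤ (k : ℕ) →
      i ≠ j → j ≠ k → i ≠ k → δ g i = δ g j := by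
    intro i j k hi hj hk hij hjk hik
    set p : Equiv.Perm (Fin n) := Equiv.swap i j * Equiv.swap j k with hp
    have hpmem : p ∈ alternatingGroup (Fin n) := by
      rw [Equiv.Perm.mem_alternatingGroup]
      rw [hp, map_mul, Equiv.Perm.sign_swap hij, Equiv.Perm.sign_swap hjk]
      norm_num
    set h : ↥(alternatingGroup (Fin n)) := ⟨p, hpmem⟩ with hh
    have hdisj : ((g : Equiv.Perm (Fin n))).Disjoint p := by
      intro x
      by_cases hx : 4 ≤ (x : ℕ)
      · left; exact hgfix x hx
      · right
        have hxi : x ≠ i := fun he => by rw [he] at hx; omega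
        have hxj : x ≠ j := fun he => by rw [he] at hx; omega
        have hxk : x ≠ k := fun he => by rw [he] at hx; omega
        rw [hp, Equiv.Perm.mul_apply, Equiv.swap_apply_of_ne_of_ne hxj hxk,
          Equiv.swap_apply_of_ne_of_ne hxi hxj]
    have hcomm : g * h = h * g := by
      apply Subtype.ext
      simpa using hdisj.commute.eq
    have heq : (fun m => δ g ((h : Equiv.Perm (Fin n))⁻¹ m)) + δ h
        = (fun m => δ h ((g : Equiv.Perm (Fin n))⁻¹ m)) + δ g := by
      rw [← hder g h, hcomm, hder h g]
    have hpj : (h : Equiv.Perm (Fin n))⁻¹ j = i := by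
      show p⁻¹ j = i
      rw [hp, mul_inv_rev, Equiv.swap_inv, Equiv.swap_inv, Equiv.Perm.mul_apply,
        Equiv.swap_apply_right, Equiv.swap_apply_of_ne_of_ne hij hik]
    have hgj : (g : Equiv.Perm (Fin n))⁻¹ j = j := by rw [hginv]; exact hgfix j hj
    have hj' := congrFun heq j
    simp only [Pi.add_apply, hpj, hgj] at hj'
    have := congrArg (fun z => z + δ h j) hj'
    simpa [add_assoc, add_comm, add_left_comm, CharTwo.add_self_eq_zero] using hj'
  -- all large coordinates are equal to the one at index 4
  have const : ∀ i : Fin n, 4 ≤ (i : ℕ) → δ g i = δ g e4 := by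
    intro i hi
    by_cases h4 : (i : ℕ) = 4
    · rw [show i = e4 from Fin.ext h4]
    · have hi5 : 5 ≤ (i : ℕ) := by omega
      have hn7 : 7 ≤ n := by
        have := i.isLt
        obtain ⟨m, hm⟩ := hodd
        omega
      by_cases h5 : (i : ℕ) = 5
      · exact key i e4 ⟨6, by omega⟩ hi (by rw [v4]) (by norm_num)
          (nemk _ _ (by rw [v4]; omega)) (nemk _ _ (by rw [v4]; norm_num))
          (nemk _ _ (by norm_num; omega))
      · exact key i e4 ⟨5, by omega⟩ hi (by rw [v4]) (by norm_num)
          (nemk _ _ (by rw [v4]; omega)) (nemk _ _ (by rw [v4]; norm_num))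
          (nemk _ _ (by norm_num; omega))
  -- the common value is 0, via the coordinate-sum condition
  have hc0 : δ g e4 = 0 := by
    have hfilter : Finset.univ.filter (fun m : Fin n => (m : ℕ) < 4)
        = {e0, e1, e2, e3} := by
      ext m
      simp only [Finset.mem_filter, Finset.mem_univ, true_and, Finset.mem_insert,
        Finset.mem_singleton, Fin.ext_iff, v0, v1, v2, v3]
      omega
    have hcard4 : (Finset.univ.filter (fun m : Fin n => (m : ℕ) < 4)).card = 4 := by
      rw [hfilter]
      rw [Finset.card_insert_of_notMem (by simp [Fin.ext_iff, v0, v1, v2, v3]),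
        Finset.card_insert_of_notMem (by simp [Fin.ext_iff, v1, v2, v3]),
        Finset.card_insert_of_notMem (by simp [Fin.ext_iff, v2, v3]),
        Finset.card_singleton]
    have hcardge : (Finset.univ.filter (fun m : Fin n => ¬ (m : ℕ) < 4)).card = n - 4 := by
      have := Finset.card_filter_add_card_filter_not
        (s := (Finset.univ : Finset (Fin n))) (p := fun m : Fin n => (m : ℕ) < 4)
      rw [Finset.card_univ, Fintype.card_fin, hcard4] at this
      omega
    have hsplit := Finset.sum_filter_add_sum_filter_not Finset.univ
      (fun m : Fin n => (m : ℕ) < 4) (δ g)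
    rw [hsum g] at hsplit
    have hsmall : ∑ m ∈ Finset.univ.filter (fun m : Fin n => (m : ℕ) < 4), δ g m = 0 := by
      rw [hfilter]
      rw [Finset.sum_insert (by simp [Fin.ext_iff, v0, v1, v2, v3]),
        Finset.sum_insert (by simp [Fin.ext_iff, v1, v2, v3]),
        Finset.sum_insert (by simp [Fin.ext_iff, v2, v3]),
        Finset.sum_singleton, h01, h23]
      rw [← add_assoc, ← add_assoc, CharTwo.add_self_eq_zero, zero_add,
        CharTwo.add_self_eq_zero]
    have hbig : ∑ m ∈ Finset.univ.filter (fun m : Fin n => ¬ (m : ℕ) < 4), δ g m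
        = (n - 4) • δ g e4 := by
      rw [Finset.sum_congr rfl (fun m hm => by
        simp only [Finset.mem_filter] at hm
        exact const m (by omega)), Finset.sum_const, hcardge]
    rw [hsmall, zero_add, hbig] at hsplit
    obtain ⟨m, hm⟩ := hodd
    have hm2 : 2 ≤ m := by omega
    have h24 : n - 4 = 2 * (m - 2) + 1 := by omega
    rw [h24, add_nsmul, one_nsmul, mul_comm 2, mul_nsmul, two_nsmul,
      CharTwo.add_self_eq_zero] at hsplit
    simpa using hsplit
  refine ⟨fun i hi => (const i hi).trans hc0, ?_, ?_, card_ub n hn⟩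
  · rw [h01, CharTwo.add_self_eq_zero]
  · rw [h23, CharTwo.add_self_eq_zero]
end

section
/- Let $A$ be a finite abelian group and $n \geq 5$. Then $d(A \times A_n) = \max(d(A), 2)$, where $d$ denotes the minimal number of generators. -/
open Equiv Equiv.Perm Subgroup
open scoped commutatorElement

lemma core {n : ℕ} (hn : 5 ≤ n) (x0 x1 x2 : Fin n)
    (h01 : x0 ≠ x1) (h02 : x0 ≠ x2) (h12 : x1 ≠ x2)
    (e1 : finRotate n x0 = x1) (e2 : finRotate n x1 = x2)
    (ρ : Perm (Fin n)) (hρ : ρ ∈ alternatingGroup (Fin n))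
    (hcase : finRotate n = ρ ∨ finRotate n = ρ * Equiv.swap x0 x1) :
    closure {Equiv.swap x0 x1 * Equiv.swap x1 x2, ρ} = alternatingGroup (Fin n) := by
  set t := Equiv.swap x0 x1 with ht_def
  set c := Equiv.swap x0 x1 * Equiv.swap x1 x2 with hc_def
  set σ := finRotate n with hσ_def
  set H := closure ({c, ρ} : Set (Perm (Fin n))) with hH_def
  have htt : t * t = 1 := by rw [ht_def, Equiv.swap_mul_self]
  have hinv : t⁻¹ = t := by rw [ht_def, Equiv.swap_inv]
  have hcH : c ∈ H := subset_closure (Set.mem_insert _ _)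
  have hρH : ρ ∈ H := subset_closure (Set.mem_insert_of_mem _ rfl)
  have key : t * σ * t = c * σ := by
    have h1 : σ * t * σ⁻¹ = Equiv.swap x1 x2 := by
      rw [← e1, ← e2, ht_def, ← swap_apply_apply]
    calc t * σ * t = t * (σ * t * σ⁻¹) * σ := by group
    _ = t * Equiv.swap x1 x2 * σ := by rw [h1]
    _ = c * σ := by rw [hc_def, mul_assoc]
  have keyρ : t * ρ * t⁻¹ = c * ρ := by
    rw [hinv]
    rcases hcase with h | h
    · rw [← h]; exact key
    · have hρσ : ρ = σ * t := by
        rw [h, mul_assoc, htt, mul_one]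
      rw [hρσ, ← mul_assoc c σ t, ← key]
      simp only [mul_assoc, htt, mul_one]
  have htct : t * c * t⁻¹ = c⁻¹ := by
    rw [hinv, hc_def, mul_inv_rev, Equiv.swap_inv, Equiv.swap_inv, ht_def,
      ← mul_assoc, Equiv.swap_mul_self, one_mul]
  have hmap : Subgroup.map (MulAut.conj t).toMonoidHom H = H := by
    rw [hH_def, MonoidHom.map_closure]
    have e_c : (MulAut.conj t).toMonoidHom c = c⁻¹ := by
      simpa [MulAut.conj_apply] using htct
    have e_ρ : (MulAut.conj t).toMonoidHom ρ = c * ρ := by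
      simpa [MulAut.conj_apply] using keyρ
    rw [Set.image_pair, e_c, e_ρ]
    have hc' : c ∈ closure ({c⁻¹, c * ρ} : Set (Perm (Fin n))) := by
      have hci := inv_mem (subset_closure (Set.mem_insert c⁻¹ {c * ρ}) :
        c⁻¹ ∈ closure ({c⁻¹, c * ρ} : Set (Perm (Fin n))))
      rwa [inv_inv] at hci
    have hρ' : ρ ∈ closure ({c⁻¹, c * ρ} : Set (Perm (Fin n))) := by
      have h2 : c * ρ ∈ closure ({c⁻¹, c * ρ} : Set (Perm (Fin n))) :=
        subset_closure (Set.mem_insert_of_mem _ rfl)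
      have h3 := mul_mem (inv_mem hc') h2
      rwa [← mul_assoc, inv_mul_cancel, one_mul] at h3
    apply le_antisymm
    · rw [closure_le]
      rintro f (rfl | rfl)
      · exact SetLike.mem_coe.mpr (inv_mem hcH)
      · exact SetLike.mem_coe.mpr (mul_mem hcH hρH)
    · rw [closure_le]
      rintro f (rfl | rfl)
      · exact SetLike.mem_coe.mpr hc'
      · exact SetLike.mem_coe.mpr hρ'
  have ht_norm : t ∈ normalizer (H : Set (Perm (Fin n))) := by
    rw [mem_normalizer_iff]
    intro h
    constructor
    · intro hh
      have h4 : (MulAut.conj t).toMonoidHom h ∈ Subgroup.map (MulAut.conj t).toMonoidHom H :=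
        Subgroup.mem_map_of_mem _ hh
      rw [hmap] at h4
      simpa [MulAut.conj_apply] using h4
    · intro hh
      have h4 : t * h * t⁻¹ ∈ Subgroup.map (MulAut.conj t).toMonoidHom H := by
        rw [hmap]; exact hh
      obtain ⟨h', hh', he⟩ := h4
      simp only [MulAut.conj_apply, MulEquiv.coe_toMonoidHom] at he
      have : h' = h := mul_left_cancel (mul_right_cancel he)
      rwa [← this]
  have hσ_norm : σ ∈ normalizer (H : Set (Perm (Fin n))) := by
    rcases hcase with h | h
    · show σ ∈ normalizer (H : Set (Perm (Fin n)))
      rw [show σ = ρ from h]; exact le_normalizer hρH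
    · show σ ∈ normalizer (H : Set (Perm (Fin n)))
      rw [show σ = ρ * t from h]; exact mul_mem (le_normalizer hρH) ht_norm
  have hnormal : H.Normal := by
    rw [← normalizer_eq_top_iff]
    rw [eq_top_iff, ← closure_cycle_adjacent_swap (isCycle_finRotate_of_le (by omega))
      (support_finRotate_of_le (by omega)) x0, closure_le]
    rintro f (rfl | rfl)
    · exact hσ_norm
    · have h5 : Equiv.swap x0 (finRotate n x0) = t := by rw [show finRotate n x0 = x1 from e1]
      rw [h5]; exact ht_norm
  have hc3 : IsThreeCycle c := by
    have h := isThreeCycle_swap_mul_swap_same h01.symm h12 h02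
    rwa [Equiv.swap_comm x1 x0] at h
  apply le_antisymm
  · rw [closure_le]
    rintro f (rfl | rfl)
    · exact hc3.mem_alternatingGroup
    · exact hρ
  · rw [← closure_three_cycles_eq_alternating, closure_le]
    intro f hf
    have hconj : IsConj c f := isConj_of_cycleType_eq (hc3.trans hf.symm)
    obtain ⟨g, hg⟩ := isConj_iff.mp hconj
    rw [← hg]
    exact SetLike.mem_coe.mpr (hnormal.conj_mem c hcH g)

lemma alt_pair (n : ℕ) (hn : 5 ≤ n) :
    ∃ a b : alternatingGroup (Fin n),
      closure ({a, b} : Set (alternatingGroup (Fin n))) = ⊤ := by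
  obtain ⟨m, rfl⟩ : ∃ m, n = m + 1 := ⟨n - 1, by omega⟩
  have hm : 4 ≤ m := by omega
  set x0 : Fin (m+1) := ⟨0, by omega⟩ with hx0
  set x1 : Fin (m+1) := ⟨1, by omega⟩ with hx1
  set x2 : Fin (m+1) := ⟨2, by omega⟩ with hx2
  have h01 : x0 ≠ x1 := by simp [hx0, hx1, Fin.ext_iff]
  have h02 : x0 ≠ x2 := by simp [hx0, hx2, Fin.ext_iff]
  have h12 : x1 ≠ x2 := by simp [hx1, hx2, Fin.ext_iff]
  have e1 : finRotate (m+1) x0 = x1 := by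
    rw [finRotate_succ_apply]
    apply Fin.ext
    rw [Fin.val_add]
    simp [hx0, hx1, Fin.val_one', Nat.mod_eq_of_lt (by omega : (1:ℕ) < m + 1)]
  have e2 : finRotate (m+1) x1 = x2 := by
    rw [finRotate_succ_apply]
    apply Fin.ext
    rw [Fin.val_add_one_of_lt (by rw [Fin.lt_def, Fin.val_last]; show 1 < m; omega)]
  have hKρ : ∃ ρ : Perm (Fin (m+1)), ρ ∈ alternatingGroup (Fin (m+1)) ∧
      (finRotate (m+1) = ρ ∨ finRotate (m+1) = ρ * Equiv.swap x0 x1) := by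
    rcases Nat.even_or_odd m with hme | hmo
    · refine ⟨finRotate (m+1), ?_, Or.inl rfl⟩
      rw [mem_alternatingGroup, sign_finRotate, Nat.add_sub_cancel, hme.neg_one_pow]
    · refine ⟨finRotate (m+1) * Equiv.swap x0 x1, ?_, Or.inr ?_⟩
      · rw [mem_alternatingGroup, map_mul, sign_finRotate, Nat.add_sub_cancel, hmo.neg_one_pow,
          sign_swap h01]
        norm_num
      · rw [mul_assoc, Equiv.swap_mul_self, mul_one]
  obtain ⟨ρ, hρmem, hcase⟩ := hKρ
  have hcore := core (by omega) x0 x1 x2 h01 h02 h12 e1 e2 ρ hρmem hcase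
  have hcmem : Equiv.swap x0 x1 * Equiv.swap x1 x2 ∈ alternatingGroup (Fin (m+1)) := by
    rw [mem_alternatingGroup, map_mul, sign_swap h01, sign_swap h12]
    norm_num
  refine ⟨⟨_, hcmem⟩, ⟨ρ, hρmem⟩, ?_⟩
  apply Subgroup.map_injective (alternatingGroup (Fin (m+1))).subtype_injective
  rw [MonoidHom.map_closure, Set.image_pair, ← MonoidHom.range_eq_map,
    range_subtype]
  simpa using hcore

lemma alt_noncomm (n : ℕ) (hn : 5 ≤ n) :
    ∃ a b : alternatingGroup (Fin n), a * b ≠ b * a := by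
  obtain ⟨x0, x1, x2, x3, h01, h02, h03, h12, h13, h23⟩ :
      ∃ x0 x1 x2 x3 : Fin n, x0 ≠ x1 ∧ x0 ≠ x2 ∧ x0 ≠ x3 ∧ x1 ≠ x2 ∧ x1 ≠ x3 ∧ x2 ≠ x3 :=
    ⟨⟨0, by omega⟩, ⟨1, by omega⟩, ⟨2, by omega⟩, ⟨3, by omega⟩,
      by simp [Fin.ext_iff], by simp [Fin.ext_iff], by simp [Fin.ext_iff],
      by simp [Fin.ext_iff], by simp [Fin.ext_iff], by simp [Fin.ext_iff]⟩
  have hcmem : Equiv.swap x0 x1 * Equiv.swap x1 x2 ∈ alternatingGroup (Fin n) := by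
    rw [mem_alternatingGroup, map_mul, sign_swap h01, sign_swap h12]; norm_num
  have hdmem : Equiv.swap x1 x2 * Equiv.swap x2 x3 ∈ alternatingGroup (Fin n) := by
    rw [mem_alternatingGroup, map_mul, sign_swap h12, sign_swap h23]; norm_num
  refine ⟨⟨_, hcmem⟩, ⟨_, hdmem⟩, ?_⟩
  intro h
  rw [Subtype.ext_iff] at h
  have h' : ((Equiv.swap x0 x1 * Equiv.swap x1 x2) * (Equiv.swap x1 x2 * Equiv.swap x2 x3)) x1
      = ((Equiv.swap x1 x2 * Equiv.swap x2 x3) * (Equiv.swap x0 x1 * Equiv.swap x1 x2)) x1 := by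
    rw [show (((⟨_, hcmem⟩ : alternatingGroup (Fin n)) * ⟨_, hdmem⟩ : alternatingGroup (Fin n)) : Perm (Fin n))
        = (Equiv.swap x0 x1 * Equiv.swap x1 x2) * (Equiv.swap x1 x2 * Equiv.swap x2 x3) from rfl,
      show (((⟨_, hdmem⟩ : alternatingGroup (Fin n)) * ⟨_, hcmem⟩ : alternatingGroup (Fin n)) : Perm (Fin n))
        = (Equiv.swap x1 x2 * Equiv.swap x2 x3) * (Equiv.swap x0 x1 * Equiv.swap x1 x2) from rfl] at h
    rw [h]
  have hcd : ((Equiv.swap x0 x1 * Equiv.swap x1 x2) * (Equiv.swap x1 x2 * Equiv.swap x2 x3)) x1 = x0 := by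
    rw [mul_apply, mul_apply, mul_apply, swap_apply_of_ne_of_ne h12 h13,
      Equiv.swap_apply_self, swap_apply_right]
  have hdc : ((Equiv.swap x1 x2 * Equiv.swap x2 x3) * (Equiv.swap x0 x1 * Equiv.swap x1 x2)) x1 = x3 := by
    rw [mul_apply, mul_apply, mul_apply, swap_apply_left,
      swap_apply_of_ne_of_ne h02.symm h12.symm, swap_apply_left,
      swap_apply_of_ne_of_ne h13.symm h23.symm]
  rw [hcd, hdc] at h'
  exact h03 h'

lemma alt_commutator_top (n : ℕ) (hn : 5 ≤ n) :
    commutator (alternatingGroup (Fin n)) = ⊤ := by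
  have h5 : 5 ≤ Fintype.card (Fin n) := by simpa using hn
  apply Subgroup.map_injective (alternatingGroup (Fin n)).subtype_injective
  rw [← MonoidHom.range_eq_map, range_subtype]
  set M := Subgroup.map (alternatingGroup (Fin n)).subtype
    (commutator (alternatingGroup (Fin n))) with hM
  apply le_antisymm
  · rw [hM]; exact map_subtype_le _
  · rw [← closure_three_cycles_eq_alternating, closure_le]
    intro f hf
    set σ : alternatingGroup (Fin n) := ⟨f, hf.mem_alternatingGroup⟩ with hσ
    have hsq : IsThreeCycle ((σ * σ : alternatingGroup (Fin n)) : Perm (Fin n)) := by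
      have : ((σ * σ : alternatingGroup (Fin n)) : Perm (Fin n)) = f * f := rfl
      rw [this]
      exact hf.isThreeCycle_sq
    have hconj : IsConj σ (σ * σ) :=
      alternatingGroup.isThreeCycle_isConj (by rw [Nat.card_eq_fintype_card]; exact h5) hf hsq
    obtain ⟨g, hg⟩ := isConj_iff.mp hconj
    have hσc : σ = ⁅g, σ⁆ := by
      rw [commutatorElement_def, hg]
      group
    have hmem : σ ∈ commutator (alternatingGroup (Fin n)) := by
      rw [hσc]
      exact Subgroup.commutator_mem_commutator (mem_top g) (mem_top σ)
    show f ∈ M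
    rw [hM]
    exact Subgroup.mem_map.mpr ⟨σ, hmem, rfl⟩

/-- The minimal number of generators of a group. -/
noncomputable def ngen (G : Type*) [Group G] : ℕ :=
  sInf {k | ∃ S : Finset G, S.card = k ∧ Subgroup.closure (S : Set G) = ⊤}

lemma ngen_spec (G : Type*) [Group G] [Finite G] :
    ∃ T : Finset G, T.card = ngen G ∧ Subgroup.closure (T : Set G) = ⊤ := by
  have : Fintype G := Fintype.ofFinite G
  have hne : {k | ∃ S : Finset G, S.card = k ∧ Subgroup.closure (S : Set G) = ⊤}.Nonempty :=
    ⟨(Finset.univ : Finset G).card, Finset.univ, rfl, by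
      rw [Finset.coe_univ, Subgroup.closure_univ]⟩
  obtain ⟨T, h1, h2⟩ := Nat.sInf_mem hne
  exact ⟨T, h1, h2⟩

lemma ngen_le {G : Type*} [Group G] {T : Finset G}
    (hT : Subgroup.closure (T : Set G) = ⊤) : ngen G ≤ T.card :=
  Nat.sInf_le ⟨T, rfl, hT⟩

theorem stmt_19 (A : Type*) [CommGroup A] [Finite A] (n : ℕ) (hn : 5 ≤ n) :
    ngen (A × alternatingGroup (Fin n)) = max (ngen A) 2 := by
  classical
  apply le_antisymm
  · -- upper bound
    obtain ⟨SA, hSAcard, hSAgen⟩ := ngen_spec A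
    obtain ⟨a, b, hab⟩ := alt_pair n hn
    obtain ⟨p, q, hpq⟩ := alt_noncomm n hn
    set r := ngen A with hr
    set k := max r 2 with hk
    have hk2 : 2 ≤ k := le_max_right _ _
    set L := SA.toList with hL_def
    have hLlen : L.length = r := by rw [hL_def, Finset.length_toList, hSAcard]
    have hLnd : L.Nodup := Finset.nodup_toList SA
    have habne : a ≠ b := by
      intro he
      have h1 : ({a, b} : Set (alternatingGroup (Fin n))) = {a} := by rw [← he]; simp
      have h2 : ∀ u : alternatingGroup (Fin n), u ∈ Subgroup.closure {a} :=
        fun u => by rw [← h1, hab]; exact mem_top u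
      obtain ⟨kp, hkp⟩ := mem_closure_singleton.mp (h2 p)
      obtain ⟨kq, hkq⟩ := mem_closure_singleton.mp (h2 q)
      apply hpq
      rw [← hkp, ← hkq, ← zpow_add, ← zpow_add, add_comm]
    set f : Fin k → A × alternatingGroup (Fin n) := fun i =>
      (if h : (i : ℕ) < r then L.get ⟨(i : ℕ), by rw [hLlen]; exact h⟩ else 1,
       if (i : ℕ) = 0 then a else if (i : ℕ) = 1 then b else 1) with hf
    have hcov : ∀ i : Fin k, 2 ≤ (i : ℕ) → (i : ℕ) < r := by
      intro i h2
      have hik : (i : ℕ) < max r 2 := lt_of_lt_of_le i.isLt (le_of_eq hk)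
      rcases le_or_gt r 2 with h | h
      · rw [max_eq_right h] at hik; omega
      · rw [max_eq_left (le_of_lt h)] at hik; exact hik
    have hsnd_case : ∀ i j : Fin k, f i = f j → (i : ℕ) < 2 → (j : ℕ) < 2 → i = j := by
      intro i j hij hi2 hj2
      have hsnd := congrArg Prod.snd hij
      have hi : (i : ℕ) = 0 ∨ (i : ℕ) = 1 := by omega
      have hj : (j : ℕ) = 0 ∨ (j : ℕ) = 1 := by omega
      rcases hi with hi | hi <;> rcases hj with hj | hj
      · exact Fin.ext (by omega)
      · exfalso; simp [hf, hi, hj] at hsnd; exact habne hsnd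
      · exfalso; simp [hf, hi, hj] at hsnd; exact habne hsnd.symm
      · exact Fin.ext (by omega)
    have hinj : Function.Injective f := by
      intro i j hij
      by_cases hir : (i : ℕ) < r <;> by_cases hjr : (j : ℕ) < r
      · have hfst := congrArg Prod.fst hij
        simp only [hf, dif_pos hir, dif_pos hjr] at hfst
        have h' := congrArg Fin.val ((List.Nodup.get_inj_iff hLnd).mp hfst)
        exact Fin.ext h'
      · have hj2 : (j : ℕ) < 2 := by
          by_contra h2; exact hjr (hcov j (by omega))
        have hjr' := Nat.le_of_not_lt hjr
        have hi2 : (i : ℕ) < 2 := by omega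
        exact hsnd_case i j hij hi2 hj2
      · have hi2 : (i : ℕ) < 2 := by
          by_contra h2; exact hir (hcov i (by omega))
        have hir' := Nat.le_of_not_lt hir
        have hj2 : (j : ℕ) < 2 := by omega
        exact hsnd_case i j hij hi2 hj2
      · have hi2 : (i : ℕ) < 2 := by
          by_contra h2; exact hir (hcov i (by omega))
        have hj2 : (j : ℕ) < 2 := by
          by_contra h2; exact hjr (hcov j (by omega))
        exact hsnd_case i j hij hi2 hj2
    set H := Subgroup.closure (Set.range f) with hH
    have hsndtop : Subgroup.map (MonoidHom.snd A (alternatingGroup (Fin n))) H = ⊤ := by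
      rw [hH, MonoidHom.map_closure]
      apply le_antisymm le_top
      rw [← hab]
      apply Subgroup.closure_mono
      rintro s (rfl | rfl)
      · refine ⟨f ⟨0, by omega⟩, Set.mem_range_self _, ?_⟩
        simp [hf]
      · refine ⟨f ⟨1, by omega⟩, Set.mem_range_self _, ?_⟩
        simp [hf]
    have hfsttop : Subgroup.map (MonoidHom.fst A (alternatingGroup (Fin n))) H = ⊤ := by
      rw [hH, MonoidHom.map_closure]
      apply le_antisymm le_top
      rw [← hSAgen]
      apply Subgroup.closure_mono
      intro x hx
      have hxL : x ∈ L := by rw [hL_def]; exact Finset.mem_toList.mpr hx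
      obtain ⟨j, hj⟩ := List.mem_iff_get.mp hxL
      have hjr : (j : ℕ) < r := by rw [← hLlen]; exact j.isLt
      have hjk : (j : ℕ) < k := lt_of_lt_of_le hjr (hk ▸ le_max_left _ _)
      refine ⟨f ⟨(j : ℕ), hjk⟩, Set.mem_range_self _, ?_⟩
      show (f ⟨(j : ℕ), hjk⟩).1 = x
      simp only [hf]
      rw [dif_pos]
      · exact hj
      · exact hjr
    have hinr : ∀ s : alternatingGroup (Fin n), ((1 : A), s) ∈ H := by
      have hsub : ⊤ ≤ Subgroup.comap (MonoidHom.inr A (alternatingGroup (Fin n))) H := by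
        rw [← alt_commutator_top n hn, _root_.commutator_def, Subgroup.commutator_le]
        intro g1 _ g2 _
        obtain ⟨h1, hh1, hs1⟩ := Subgroup.mem_map.mp (hsndtop ▸ mem_top g1)
        obtain ⟨h2, hh2, hs2⟩ := Subgroup.mem_map.mp (hsndtop ▸ mem_top g2)
        have hcomm : MonoidHom.inr A (alternatingGroup (Fin n)) ⁅g1, g2⁆ = ⁅h1, h2⁆ := by
          have hA : h1.1 * h2.1 * h1.1⁻¹ * h2.1⁻¹ = 1 := by
            rw [mul_comm h1.1 h2.1]; group
          apply Prod.ext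
          · simp only [MonoidHom.inr_apply, commutatorElement_def, Prod.fst_mul, Prod.fst_inv]
            exact hA.symm
          · simp only [MonoidHom.coe_snd] at hs1 hs2
            simp only [MonoidHom.inr_apply, commutatorElement_def, Prod.snd_mul, Prod.snd_inv,
              hs1, hs2]
        refine Subgroup.mem_comap.mpr ?_
        rw [hcomm, commutatorElement_def]
        exact mul_mem (mul_mem (mul_mem hh1 hh2) (inv_mem hh1)) (inv_mem hh2)
      intro s
      exact Subgroup.mem_comap.mp (hsub (mem_top s))
    have htop : H = ⊤ := by
      rw [eq_top_iff]
      intro x _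
      obtain ⟨h1, hh1, hs1⟩ := Subgroup.mem_map.mp (hfsttop ▸ mem_top x.1)
      have h2 := hinr (h1.2⁻¹ * x.2)
      have h3 := mul_mem hh1 h2
      have h4 : h1 * ((1 : A), h1.2⁻¹ * x.2) = x := by
        apply Prod.ext
        · simp only [Prod.fst_mul, mul_one]; exact hs1
        · simp only [Prod.snd_mul, mul_inv_cancel_left]
      rwa [h4] at h3
    have hcard : (Finset.image f Finset.univ).card = k := by
      rw [Finset.card_image_of_injective _ hinj, Finset.card_univ, Fintype.card_fin]
    have hclT : Subgroup.closure (((Finset.image f Finset.univ :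
        Finset (A × alternatingGroup (Fin n)))) : Set (A × alternatingGroup (Fin n))) = ⊤ := by
      rw [Finset.coe_image, Finset.coe_univ, Set.image_univ]
      exact htop
    calc ngen (A × alternatingGroup (Fin n)) ≤ (Finset.image f Finset.univ).card :=
        ngen_le hclT
    _ = k := hcard
  · -- lower bound
    apply max_le
    · obtain ⟨T, hTcard, hTgen⟩ := ngen_spec (A × alternatingGroup (Fin n))
      have hcl : Subgroup.closure ((T.image Prod.fst : Finset A) : Set A) = ⊤ := by
        rw [Finset.coe_image]
        have hmc := MonoidHom.map_closure (MonoidHom.fst A (alternatingGroup (Fin n)))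
          (T : Set (A × alternatingGroup (Fin n)))
        rw [hTgen] at hmc
        have hsurj : Subgroup.map (MonoidHom.fst A (alternatingGroup (Fin n))) ⊤ = ⊤ := by
          rw [← MonoidHom.range_eq_map]
          exact MonoidHom.range_eq_top.mpr Prod.fst_surjective
        rw [hsurj] at hmc
        simp only [MonoidHom.coe_fst] at hmc
        exact hmc.symm
      calc ngen A ≤ (T.image Prod.fst).card := ngen_le hcl
      _ ≤ T.card := Finset.card_image_le
      _ = ngen (A × alternatingGroup (Fin n)) := hTcard
    · by_contra hlt
      push_neg at hlt
      obtain ⟨T, hTcard, hTgen⟩ := ngen_spec (A × alternatingGroup (Fin n))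
      have hT1 : T.card ≤ 1 := by omega
      obtain ⟨x, hx⟩ := Finset.card_le_one_iff_subset_singleton.mp hT1
      have hsub : (T : Set (A × alternatingGroup (Fin n))) ⊆ {x} := by
        intro y hy
        exact Finset.mem_singleton.mp (hx (by exact_mod_cast hy))
      have hle : (⊤ : Subgroup (A × alternatingGroup (Fin n))) ≤ Subgroup.closure {x} := by
        rw [← hTgen]
        exact closure_mono hsub
      obtain ⟨p, q, hpq⟩ := alt_noncomm n hn
      obtain ⟨kp, hkp⟩ := mem_closure_singleton.mp (hle (mem_top ((1 : A), p)))
      obtain ⟨kq, hkq⟩ := mem_closure_singleton.mp (hle (mem_top ((1 : A), q)))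
      have hcomm : ((1 : A), p) * ((1 : A), q) = ((1 : A), q) * ((1 : A), p) := by
        rw [← hkp, ← hkq, ← zpow_add, ← zpow_add, add_comm]
      apply hpq
      have := congrArg Prod.snd hcomm
      simpa using this
end
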